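/- A T0 topological space X is a continuous space if and only if X is a continuous retract of some algebraic space, i.e., there exist an algebraic space Y and continuous maps s : X → Y and r : Y → X with r ∘ s = id_X. -/

import Mathlib

open Set

section Defs

variable {X : Type*} [TopologicalSpace X]

/-- Specialization order: `x ⊑ y` iff `x ∈ closure {y}`. -/
def SOrd (x y : X) : Prop := x ∈ closure ({y} : Set X)

/-- `D` is a directed subset (w.r.t. the specialization order). -/
def IsDirSub (D : Set X) : Prop :=
  D.Nonempty ∧ ∀ a ∈ D, ∀ b ∈ D, ∃ c ∈ D, SOrd a c ∧ SOrd b c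

/-- `D` converges to `x`: every open neighbourhood of `x` meets `D`. -/
def ConvTo (D : Set X) (x : X) : Prop :=
  ∀ U : Set X, IsOpen U → x ∈ U → (D ∩ U).Nonempty

/-- `U` is directed-open. -/
def DirOpen (U : Set X) : Prop :=
  ∀ (D : Set X) (x : X), IsDirSub D → ConvTo D x → x ∈ U → (D ∩ U).Nonempty

/-- `x ≪ y` : `x` d-approximates `y`. -/
def WayBelow (x y : X) : Prop :=
  ∀ D : Set X, IsDirSub D → ConvTo D y → ∃ d ∈ D, SOrd x d

/-- `↓x` w.r.t. the specialization order. -/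
def dnSet (x : X) : Set X := {z | SOrd z x}

/-- `↑x` w.r.t. the specialization order. -/
def upSet (x : X) : Set X := {z | SOrd x z}

/-- `⇓y = {x | x ≪ y}`. -/
def wbSet (y : X) : Set X := {x | WayBelow x y}

/-- `x` is the least upper bound of `D` w.r.t. the specialization order. -/
def IsSupOf (x : X) (D : Set X) : Prop :=
  (∀ d ∈ D, SOrd d x) ∧ ∀ y : X, (∀ d ∈ D, SOrd d y) → SOrd x y

/-- A topological ideal: a directed lower set having a supremum and converging to it. -/
def IsTopIdeal (A : Set X) : Prop :=
  IsDirSub A ∧ (∀ a ∈ A, ∀ z : X, SOrd z a → z ∈ A) ∧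
    ∃ s : X, IsSupOf s A ∧ ConvTo A s

end Defs

/-- The set of d-compact elements of `X`. -/
def KSet (X : Type*) [TopologicalSpace X] : Set X := {x | WayBelow x x}

/-- A directed space: a T0 space in which every directed-open set is open. -/
def IsDirectedSpace (X : Type*) [TopologicalSpace X] : Prop :=
  T0Space X ∧ ∀ U : Set X, DirOpen U → IsOpen U

/-- An algebraic space. -/
def IsAlgebraicSpace (X : Type*) [TopologicalSpace X] : Prop :=
  IsDirectedSpace X ∧
    ∀ x : X, IsDirSub (dnSet x ∩ KSet X) ∧ ConvTo (dnSet x ∩ KSet X) x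

/-- A continuous space. -/
def IsContinuousSpace (X : Type*) [TopologicalSpace X] : Prop :=
  IsDirectedSpace X ∧ ∀ x : X, ∃ D ⊆ wbSet x, IsDirSub D ∧ ConvTo D x

/-- A b-space. -/
def IsBSpace (X : Type*) [TopologicalSpace X] : Prop :=
  ∀ U : Set X, IsOpen U → ∀ x ∈ U,
    ∃ y : X, x ∈ interior (upSet y) ∧ interior (upSet y) = upSet y ∧ upSet y ⊆ U

/-- `B` is a basis of the directed space `X`. -/
def IsBasisOf (X : Type*) [TopologicalSpace X] (B : Set X) : Prop :=
  ∀ x : X, IsDirSub (wbSet x ∩ B) ∧ ConvTo (wbSet x ∩ B) x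

/-- The set of topological ideals of `X`. -/
def TopIdeal (X : Type*) [TopologicalSpace X] : Type _ := {A : Set X // IsTopIdeal A}

/-- Membership in the topology `Ω(I_T(X))`. -/
def OmegaOpen {X : Type*} [TopologicalSpace X] (𝒰 : Set (TopIdeal X)) : Prop :=
  ∀ A : TopIdeal X, A ∈ 𝒰 ↔
    ∃ B : TopIdeal X, (∃ x : X, B.1 = dnSet x) ∧ B ∈ 𝒰 ∧ B.1 ⊆ A.1

theorem sOrd_refl {X : Type*} [TopologicalSpace X] (x : X) : SOrd x x :=
  subset_closure rfl

theorem sOrd_trans {X : Type*} [TopologicalSpace X] {x y z : X}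
    (h1 : SOrd x y) (h2 : SOrd y z) : SOrd x z :=
  (closure_minimal (Set.singleton_subset_iff.mpr h2) isClosed_closure) h1

theorem principal_isTopIdeal {X : Type*} [TopologicalSpace X] (x : X) :
    IsTopIdeal (dnSet x) := by
  refine ⟨⟨⟨x, sOrd_refl x⟩, ?_⟩, ?_, x, ⟨?_, ?_⟩, ?_⟩
  · intro a ha b hb
    exact ⟨x, sOrd_refl x, ha, hb⟩
  · intro a ha z hz
    exact sOrd_trans hz ha
  · intro d hd; exact hd
  · intro y hy; exact hy x (sOrd_refl x)
  · intro U _ hxU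
    exact ⟨x, sOrd_refl x, hxU⟩

/-- The topology `Ω(I_T(X))` on the set of topological ideals. -/
def OmegaTop (X : Type*) [TopologicalSpace X] : TopologicalSpace (TopIdeal X) where
  IsOpen := OmegaOpen
  isOpen_univ := by
    intro A
    constructor
    · intro _
      obtain ⟨⟨a, ha⟩, -⟩ := A.2.1
      refine ⟨⟨dnSet a, principal_isTopIdeal a⟩, ⟨a, rfl⟩, trivial, ?_⟩
      intro z hz
      exact A.2.2.1 a ha z hz
    · intro _
      trivial
  isOpen_inter := by
    intro 𝒰 𝒱 h𝒰 h𝒱 A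
    constructor
    · rintro ⟨hAU, hAV⟩
      obtain ⟨B1, ⟨x, hx⟩, hB1U, hB1A⟩ := (h𝒰 A).mp hAU
      obtain ⟨B2, ⟨y, hy⟩, hB2V, hB2A⟩ := (h𝒱 A).mp hAV
      have hxA : x ∈ A.1 := hB1A (by rw [hx]; exact sOrd_refl x)
      have hyA : y ∈ A.1 := hB2A (by rw [hy]; exact sOrd_refl y)
      obtain ⟨c, hcA, hxc, hyc⟩ := A.2.1.2 x hxA y hyA
      have hsubU : B1.1 ⊆ dnSet c := by
        rw [hx]; intro z hz; exact sOrd_trans hz hxc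
      have hsubV : B2.1 ⊆ dnSet c := by
        rw [hy]; intro z hz; exact sOrd_trans hz hyc
      have hcU : (⟨dnSet c, principal_isTopIdeal c⟩ : TopIdeal X) ∈ 𝒰 :=
        (h𝒰 _).mpr ⟨B1, ⟨x, hx⟩, hB1U, hsubU⟩
      have hcV : (⟨dnSet c, principal_isTopIdeal c⟩ : TopIdeal X) ∈ 𝒱 :=
        (h𝒱 _).mpr ⟨B2, ⟨y, hy⟩, hB2V, hsubV⟩
      exact ⟨⟨dnSet c, principal_isTopIdeal c⟩, ⟨c, rfl⟩, ⟨hcU, hcV⟩,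
        fun z hz => A.2.2.1 c hcA z hz⟩
    · rintro ⟨B, hBp, ⟨hBU, hBV⟩, hBA⟩
      exact ⟨(h𝒰 A).mpr ⟨B, hBp, hBU, hBA⟩, (h𝒱 A).mpr ⟨B, hBp, hBV, hBA⟩⟩
  isOpen_sUnion := by
    intro S hS A
    constructor
    · rintro ⟨𝒰, h𝒰S, hA𝒰⟩
      obtain ⟨B, hBp, hB𝒰, hBA⟩ := (hS 𝒰 h𝒰S A).mp hA𝒰
      exact ⟨B, hBp, ⟨𝒰, h𝒰S, hB𝒰⟩, hBA⟩
    · rintro ⟨B, hBp, ⟨𝒰, h𝒰S, hB𝒰⟩, hBA⟩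
      exact ⟨𝒰, h𝒰S, (hS 𝒰 h𝒰S A).mpr ⟨B, hBp, hB𝒰, hBA⟩⟩

instance (X : Type*) [TopologicalSpace X] : TopologicalSpace (TopIdeal X) :=
  OmegaTop X

section Aux

variable {X : Type*} [TopologicalSpace X]

theorem open_upper' {U : Set X} (hU : IsOpen U) {x y : X} (hx : x ∈ U) (hxy : SOrd x y) :
    y ∈ U := by
  obtain ⟨z, hz1, hz2⟩ := (mem_closure_iff.mp hxy) U hU hx
  rwa [Set.mem_singleton_iff.mp hz2] at hz1

theorem convTo_of_sord {D : Set X} {x y : X} (h : ConvTo D y) (hxy : SOrd x y) : ConvTo D x :=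
  fun U hU hxU => h U hU (open_upper' hU hxU hxy)

theorem singleton_dirSub (x : X) : IsDirSub ({x} : Set X) :=
  ⟨⟨x, rfl⟩, fun a ha b hb => ⟨x, rfl,
    by rw [Set.mem_singleton_iff.mp ha]; exact sOrd_refl x,
    by rw [Set.mem_singleton_iff.mp hb]; exact sOrd_refl x⟩⟩

theorem singleton_convTo (x : X) : ConvTo ({x} : Set X) x :=
  fun U _ hx => ⟨x, rfl, hx⟩

theorem wayBelow_sord {x y : X} (h : WayBelow x y) : SOrd x y := by
  obtain ⟨d, hd, hxd⟩ := h {y} (singleton_dirSub y) (singleton_convTo y)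
  rwa [Set.mem_singleton_iff.mp hd] at hxd

theorem sord_wayBelow_left {a b c : X} (hab : SOrd a b) (h : WayBelow b c) : WayBelow a c :=
  fun E hE hc => let ⟨e, he, hbe⟩ := h E hE hc; ⟨e, he, sOrd_trans hab hbe⟩

theorem wayBelow_sord_right {a b c : X} (h : WayBelow a b) (hbc : SOrd b c) : WayBelow a c :=
  fun E hE hc => h E hE (convTo_of_sord hc hbc)

theorem dnSet_mono {a c : X} (h : SOrd a c) : dnSet a ⊆ dnSet c :=
  fun _ hz => sOrd_trans hz h

theorem sord_antisymm' [T0Space X] {x y : X} (h1 : SOrd x y) (h2 : SOrd y x) : x = y := by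
  have : Inseparable x y := by
    rw [inseparable_iff_forall_isOpen]
    exact fun U hU => ⟨fun hx => open_upper' hU hx h1, fun hy => open_upper' hU hy h2⟩
  exact this.eq

/- maps -/
theorem sord_map {Y : Type*} [TopologicalSpace Y] {f : X → Y} (hf : Continuous f)
    {a b : X} (h : SOrd a b) : SOrd (f a) (f b) := by
  have h1 : f a ∈ f '' closure {b} := Set.mem_image_of_mem f h
  have h2 : f '' closure {b} ⊆ closure (f '' {b}) := image_closure_subset_closure_image hf
  have := h2 h1
  rwa [Set.image_singleton] at this

theorem convTo_map {Y : Type*} [TopologicalSpace Y] {f : X → Y} (hf : Continuous f)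
    {D : Set X} {x : X} (h : ConvTo D x) : ConvTo (f '' D) (f x) := by
  intro V hV hfx
  obtain ⟨d, hd, hdV⟩ := h (f ⁻¹' V) (hV.preimage hf) hfx
  exact ⟨f d, Set.mem_image_of_mem f hd, hdV⟩

theorem dirSub_map {Y : Type*} [TopologicalSpace Y] {f : X → Y} (hf : Continuous f)
    {D : Set X} (h : IsDirSub D) : IsDirSub (f '' D) := by
  obtain ⟨⟨d0, hd0⟩, hdir⟩ := h
  refine ⟨⟨f d0, Set.mem_image_of_mem f hd0⟩, ?_⟩
  rintro _ ⟨a, ha, rfl⟩ _ ⟨b, hb, rfl⟩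
  obtain ⟨c, hc, hac, hbc⟩ := hdir a ha b hb
  exact ⟨f c, Set.mem_image_of_mem f hc, sord_map hf hac, sord_map hf hbc⟩

/-- Backward direction: a continuous retract of an algebraic space is continuous. -/
theorem isContinuous_of_retract [T0Space X] {Y : Type*} [TopologicalSpace Y]
    (hY : IsAlgebraicSpace Y) {s : X → Y} {r : Y → X} (hs : Continuous s) (hr : Continuous r)
    (hrs : r ∘ s = id) : IsContinuousSpace X := by
  have hrs' : ∀ x, r (s x) = x := fun x => congrFun hrs x
  constructor
  · refine ⟨‹T0Space X›, ?_⟩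
    intro U hU
    have hpre : IsOpen (r ⁻¹' U) := by
      apply hY.1.2
      intro D y hD hconv hyU
      obtain ⟨_, ⟨d, hd, rfl⟩, hdU⟩ :=
        hU (r '' D) (r y) (dirSub_map hr hD) (convTo_map hr hconv) hyU
      exact ⟨d, hd, hdU⟩
    have : U = s ⁻¹' (r ⁻¹' U) := by
      ext x; simp [hrs' x]
    rw [this]
    exact hpre.preimage hs
  · intro x
    obtain ⟨hEdir, hEconv⟩ := hY.2 (s x)
    refine ⟨r '' (dnSet (s x) ∩ KSet Y), ?_, dirSub_map hr hEdir, ?_⟩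
    · rintro _ ⟨k, ⟨hk1, hk2⟩, rfl⟩
      intro D' hD' hconv'
      have hconvk : ConvTo (s '' D') k :=
        convTo_of_sord (convTo_map hs hconv') hk1
      obtain ⟨_, ⟨d, hd, rfl⟩, hke⟩ := hk2 (s '' D') (dirSub_map hs hD') hconvk
      refine ⟨d, hd, ?_⟩
      have := sord_map hr hke
      rwa [hrs' d] at this
    · intro U hU hxU
      have hsx : s x ∈ r ⁻¹' U := by simp [hrs' x, hxU]
      obtain ⟨e, he, heU⟩ := hEconv (r ⁻¹' U) (hU.preimage hr) hsx
      exact ⟨r e, Set.mem_image_of_mem r he, heU⟩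

/- ## The ideal completion -/

theorem isOpen_topIdeal_iff {𝒰 : Set (TopIdeal X)} : IsOpen 𝒰 ↔ OmegaOpen 𝒰 := Iff.rfl

/-- Principal ideal as an element of `TopIdeal X`. -/
def pIdeal (x : X) : TopIdeal X := ⟨dnSet x, principal_isTopIdeal x⟩

theorem uset_open (a : X) : IsOpen {C : TopIdeal X | a ∈ C.1} := by
  rw [isOpen_topIdeal_iff]
  intro A
  constructor
  · intro haA
    exact ⟨pIdeal a, ⟨a, rfl⟩, sOrd_refl a, fun z hz => A.2.2.1 a haA z hz⟩
  · rintro ⟨B, -, haB, hBA⟩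
    exact hBA haB

theorem sord_ideal_iff {A B : TopIdeal X} : SOrd A B ↔ A.1 ⊆ B.1 := by
  constructor
  · intro h a haA
    obtain ⟨z, hz1, hz2⟩ := (mem_closure_iff.mp h) _ (uset_open a) haA
    rw [Set.mem_singleton_iff.mp hz2] at hz1
    exact hz1
  · intro hAB
    rw [SOrd, mem_closure_iff]
    intro 𝒰 h𝒰 hA𝒰
    obtain ⟨P, hPx, hP𝒰, hPA⟩ := (h𝒰 A).mp hA𝒰
    exact ⟨B, (h𝒰 B).mpr ⟨P, hPx, hP𝒰, hPA.trans hAB⟩, rfl⟩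

theorem topIdeal_t0 : T0Space (TopIdeal X) := by
  refine (t0Space_iff_inseparable _).mpr fun A B h => ?_
  have h' := inseparable_iff_forall_isOpen.mp h
  apply Subtype.ext
  ext a
  exact ⟨fun ha => (h' _ (uset_open a)).mp ha, fun ha => (h' _ (uset_open a)).mpr ha⟩

theorem pIdeal_mem (x : X) : x ∈ (pIdeal x).1 := sOrd_refl x

theorem pIdeals_dirSub (A : TopIdeal X) : IsDirSub (pIdeal '' A.1) := by
  obtain ⟨⟨a0, ha0⟩, hdir⟩ := A.2.1
  refine ⟨⟨pIdeal a0, Set.mem_image_of_mem _ ha0⟩, ?_⟩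
  rintro _ ⟨a, ha, rfl⟩ _ ⟨b, hb, rfl⟩
  obtain ⟨c, hc, hac, hbc⟩ := hdir a ha b hb
  exact ⟨pIdeal c, Set.mem_image_of_mem _ hc,
    sord_ideal_iff.mpr (dnSet_mono hac), sord_ideal_iff.mpr (dnSet_mono hbc)⟩

theorem pIdeals_convTo (A : TopIdeal X) : ConvTo (pIdeal '' A.1) A := by
  intro 𝒰 h𝒰 hA𝒰
  obtain ⟨P, ⟨x, hx⟩, hP𝒰, hPA⟩ := (h𝒰 A).mp hA𝒰
  have hxA : x ∈ A.1 := hPA (by rw [hx]; exact sOrd_refl x)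
  have hPeq : P = pIdeal x := Subtype.ext hx
  exact ⟨P, by rw [hPeq]; exact Set.mem_image_of_mem _ hxA, hP𝒰⟩

theorem topIdeal_directedSpace : IsDirectedSpace (TopIdeal X) := by
  refine ⟨topIdeal_t0, ?_⟩
  intro 𝒱 h𝒱
  rw [isOpen_topIdeal_iff]
  intro A
  constructor
  · intro hA
    obtain ⟨P, hPmem, hP𝒱⟩ := h𝒱 _ A (pIdeals_dirSub A) (pIdeals_convTo A) hA
    obtain ⟨x, hxA, rfl⟩ := hPmem
    exact ⟨pIdeal x, ⟨x, rfl⟩, hP𝒱, fun z hz => A.2.2.1 x hxA z hz⟩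
  · rintro ⟨B, -, hB𝒱, hBA⟩
    have hconv : ConvTo ({A} : Set (TopIdeal X)) B :=
      convTo_of_sord (singleton_convTo A) (sord_ideal_iff.mpr hBA)
    obtain ⟨c, hc, hc𝒱⟩ := h𝒱 {A} B (singleton_dirSub A) hconv hB𝒱
    rwa [Set.mem_singleton_iff.mp hc] at hc𝒱

theorem pIdeal_compact (x : X) : WayBelow (pIdeal x) (pIdeal x) := by
  intro D hD hconv
  obtain ⟨B, hBD, hxB⟩ := hconv _ (uset_open x) (sOrd_refl x)
  exact ⟨B, hBD, sord_ideal_iff.mpr fun z hz => B.2.2.1 x hxB z hz⟩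

theorem compact_eq_pIdeal {B : TopIdeal X} (h : WayBelow B B) :
    ∃ a ∈ B.1, B = pIdeal a := by
  obtain ⟨_, ⟨a, haB, rfl⟩, hBP⟩ := h _ (pIdeals_dirSub B) (pIdeals_convTo B)
  exact ⟨a, haB, Subtype.ext (subset_antisymm (sord_ideal_iff.mp hBP)
    fun z hz => B.2.2.1 a haB z hz)⟩

theorem topIdeal_algebraic : IsAlgebraicSpace (TopIdeal X) := by
  refine ⟨topIdeal_directedSpace, fun A => ⟨⟨?_, ?_⟩, ?_⟩⟩
  · obtain ⟨⟨a, ha⟩, -⟩ := A.2.1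
    exact ⟨pIdeal a, sord_ideal_iff.mpr fun z hz => A.2.2.1 a ha z hz, pIdeal_compact a⟩
  · rintro B1 ⟨hB1A, hB1c⟩ B2 ⟨hB2A, hB2c⟩
    obtain ⟨a1, ha1, rfl⟩ := compact_eq_pIdeal hB1c
    obtain ⟨a2, ha2, rfl⟩ := compact_eq_pIdeal hB2c
    have ha1A : a1 ∈ A.1 := sord_ideal_iff.mp hB1A ha1
    have ha2A : a2 ∈ A.1 := sord_ideal_iff.mp hB2A ha2
    obtain ⟨c, hcA, h1c, h2c⟩ := A.2.1.2 a1 ha1A a2 ha2A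
    refine ⟨pIdeal c, ⟨sord_ideal_iff.mpr fun z hz => A.2.2.1 c hcA z hz, pIdeal_compact c⟩,
      sord_ideal_iff.mpr (dnSet_mono h1c), sord_ideal_iff.mpr (dnSet_mono h2c)⟩
  · intro 𝒰 h𝒰 hA𝒰
    obtain ⟨P, ⟨x, hx⟩, hP𝒰, hPA⟩ := (h𝒰 A).mp hA𝒰
    have hPeq : P = pIdeal x := Subtype.ext hx
    refine ⟨P, ⟨sord_ideal_iff.mpr hPA, ?_⟩, hP𝒰⟩
    rw [hPeq]; exact pIdeal_compact x

/- ## The retraction map -/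

noncomputable def rmap (A : TopIdeal X) : X := A.2.2.2.choose

theorem rmap_spec (A : TopIdeal X) : IsSupOf (rmap A) A.1 ∧ ConvTo A.1 (rmap A) :=
  A.2.2.2.choose_spec

theorem sup_unique [T0Space X] {a b : X} {S : Set X} (h1 : IsSupOf a S) (h2 : IsSupOf b S) :
    a = b :=
  sord_antisymm' (h1.2 b h2.1) (h2.2 a h1.1)

theorem pIdeal_isSup (x : X) : IsSupOf x (dnSet x) :=
  ⟨fun _ hd => hd, fun _ hy => hy x (sOrd_refl x)⟩

theorem rmap_pIdeal [T0Space X] (x : X) : rmap (pIdeal x) = x :=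
  sup_unique (rmap_spec (pIdeal x)).1 (pIdeal_isSup x)

theorem rmap_continuous [T0Space X] : Continuous (rmap : TopIdeal X → X) := by
  rw [continuous_def]
  intro U hU
  rw [isOpen_topIdeal_iff]
  intro A
  constructor
  · intro hA
    obtain ⟨a, haA, haU⟩ := (rmap_spec A).2 U hU hA
    refine ⟨pIdeal a, ⟨a, rfl⟩, ?_, fun z hz => A.2.2.1 a haA z hz⟩
    show rmap (pIdeal a) ∈ U
    rw [rmap_pIdeal]; exact haU
  · rintro ⟨B, ⟨x, hx⟩, hBU, hBA⟩
    have hB : B = pIdeal x := Subtype.ext hx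
    have hxU : x ∈ U := by rwa [hB, show (pIdeal x ∈ rmap ⁻¹' U) ↔ rmap (pIdeal x) ∈ U from Iff.rfl, rmap_pIdeal] at hBU
    have hxA : x ∈ A.1 := hBA (by rw [hx]; exact sOrd_refl x)
    exact open_upper' hU hxU ((rmap_spec A).1.1 x hxA)

/- ## Continuous spaces: interpolation and the section -/

theorem doubleWb_dir_conv (hX : IsContinuousSpace X) (x : X) :
    IsDirSub {u : X | ∃ v, WayBelow u v ∧ WayBelow v x} ∧
      ConvTo {u : X | ∃ v, WayBelow u v ∧ WayBelow v x} x := by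
  obtain ⟨D, hDsub, hDdir, hDconv⟩ := hX.2 x
  have hGconv : ConvTo {u : X | ∃ v, WayBelow u v ∧ WayBelow v x} x := by
    intro U hU hxU
    obtain ⟨d, hdD, hdU⟩ := hDconv U hU hxU
    obtain ⟨C, hCsub, hCdir, hCconv⟩ := hX.2 d
    obtain ⟨c, hcC, hcU⟩ := hCconv U hU hdU
    exact ⟨c, ⟨d, hCsub hcC, hDsub hdD⟩, hcU⟩
  refine ⟨⟨?_, ?_⟩, hGconv⟩
  · obtain ⟨g, hg, -⟩ := hGconv Set.univ isOpen_univ (Set.mem_univ x)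
    exact ⟨g, hg⟩
  · rintro u1 ⟨v1, h1, hv1⟩ u2 ⟨v2, h2, hv2⟩
    obtain ⟨d1, hd1, hv1d1⟩ := hv1 D hDdir hDconv
    obtain ⟨d2, hd2, hv2d2⟩ := hv2 D hDdir hDconv
    obtain ⟨d, hdD, hd1d, hd2d⟩ := hDdir.2 d1 hd1 d2 hd2
    obtain ⟨C, hCsub, hCdir, hCconv⟩ := hX.2 d
    have hu1d : WayBelow u1 d := wayBelow_sord_right h1 (sOrd_trans hv1d1 hd1d)
    have hu2d : WayBelow u2 d := wayBelow_sord_right h2 (sOrd_trans hv2d2 hd2d)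
    obtain ⟨c1, hc1C, hu1c1⟩ := hu1d C hCdir hCconv
    obtain ⟨c2, hc2C, hu2c2⟩ := hu2d C hCdir hCconv
    obtain ⟨c, hcC, hc1c, hc2c⟩ := hCdir.2 c1 hc1C c2 hc2C
    exact ⟨c, ⟨d, hCsub hcC, hDsub hdD⟩, sOrd_trans hu1c1 hc1c, sOrd_trans hu2c2 hc2c⟩

theorem interpolation (hX : IsContinuousSpace X) {y x : X} (h : WayBelow y x) :
    ∃ z, WayBelow y z ∧ WayBelow z x := by
  obtain ⟨hGdir, hGconv⟩ := doubleWb_dir_conv hX x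
  obtain ⟨u, ⟨v, huv, hvx⟩, hyu⟩ := h _ hGdir hGconv
  exact ⟨v, sord_wayBelow_left hyu huv, hvx⟩

theorem wbSet_dir_conv (hX : IsContinuousSpace X) (x : X) :
    IsDirSub (wbSet x) ∧ ConvTo (wbSet x) x := by
  obtain ⟨hGdir, hGconv⟩ := doubleWb_dir_conv hX x
  have hGsub : {u : X | ∃ v, WayBelow u v ∧ WayBelow v x} ⊆ wbSet x := by
    rintro u ⟨v, huv, hvx⟩
    exact sord_wayBelow_left (wayBelow_sord huv) hvx
  refine ⟨⟨?_, ?_⟩, ?_⟩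
  · obtain ⟨g, hg⟩ := hGdir.1
    exact ⟨g, hGsub hg⟩
  · intro y1 hy1 y2 hy2
    obtain ⟨g1, hg1, h1⟩ := hy1 _ hGdir hGconv
    obtain ⟨g2, hg2, h2⟩ := hy2 _ hGdir hGconv
    obtain ⟨g, hg, hg1g, hg2g⟩ := hGdir.2 g1 hg1 g2 hg2
    exact ⟨g, hGsub hg, sOrd_trans h1 hg1g, sOrd_trans h2 hg2g⟩
  · intro U hU hxU
    obtain ⟨g, hg, hgU⟩ := hGconv U hU hxU
    exact ⟨g, hGsub hg, hgU⟩

theorem wbSet_isSup (hX : IsContinuousSpace X) (x : X) : IsSupOf x (wbSet x) := by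
  refine ⟨fun d hd => wayBelow_sord hd, ?_⟩
  intro y hy
  rw [SOrd, mem_closure_iff]
  intro U hU hxU
  obtain ⟨d, hd, hdU⟩ := (wbSet_dir_conv hX x).2 U hU hxU
  exact ⟨y, open_upper' hU hdU (hy d hd), rfl⟩

theorem wbSet_topIdeal (hX : IsContinuousSpace X) (x : X) : IsTopIdeal (wbSet x) :=
  ⟨(wbSet_dir_conv hX x).1, fun _ ha _ hz => sord_wayBelow_left hz ha,
    x, wbSet_isSup hX x, (wbSet_dir_conv hX x).2⟩

theorem wbUp_open (hX : IsContinuousSpace X) (z : X) : IsOpen {x : X | WayBelow z x} := by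
  apply hX.1.2
  intro D x hD hconv hzx
  obtain ⟨w, hzw, hwx⟩ := interpolation hX hzx
  obtain ⟨d, hdD, hwd⟩ := hwx D hD hconv
  exact ⟨d, hdD, wayBelow_sord_right hzw hwd⟩

/-- The section `x ↦ ⇓x`. -/
def smap (hX : IsContinuousSpace X) (x : X) : TopIdeal X := ⟨wbSet x, wbSet_topIdeal hX x⟩

theorem smap_continuous (hX : IsContinuousSpace X) :
    Continuous (smap hX) := by
  set s : X → TopIdeal X := smap hX with hs
  rw [continuous_def]
  intro 𝒰 h𝒰
  have h𝒰 : OmegaOpen 𝒰 := h𝒰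
  have heq : s ⁻¹' 𝒰 = ⋃ z ∈ {z : X | pIdeal z ∈ 𝒰}, {x : X | WayBelow z x} := by
    ext x
    simp only [Set.mem_preimage, Set.mem_iUnion, Set.mem_setOf_eq, exists_prop]
    constructor
    · intro hx
      obtain ⟨P, ⟨z, hz⟩, hP𝒰, hPsub⟩ := (h𝒰 (s x)).mp hx
      have hPeq : P = pIdeal z := Subtype.ext hz
      refine ⟨z, by rwa [hPeq] at hP𝒰, ?_⟩
      exact hPsub (by rw [hz]; exact sOrd_refl z)
    · rintro ⟨z, hz𝒰, hzx⟩
      exact (h𝒰 (s x)).mpr ⟨pIdeal z, ⟨z, rfl⟩, hz𝒰,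
        fun w hw => sord_wayBelow_left hw hzx⟩
  rw [heq]
  exact isOpen_biUnion fun z _ => wbUp_open hX z

end Aux

universe u

/-- a T0 space is a continuous space iff it is a continuous retract of
some algebraic space. -/
theorem continuous_iff_retract_of_algebraic (X : Type u) [TopologicalSpace X] [T0Space X] :
    IsContinuousSpace X ↔
      ∃ (Y : Type u) (tY : TopologicalSpace Y) (s : X → Y) (r : Y → X),
        @IsAlgebraicSpace Y tY ∧ @Continuous X Y _ tY s ∧ @Continuous Y X tY _ r ∧
          r ∘ s = id := by
  constructor
  · intro hX
    refine ⟨TopIdeal X, inferInstance, smap hX, rmap,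
      topIdeal_algebraic, smap_continuous hX, rmap_continuous, ?_⟩
    funext x
    exact sup_unique (rmap_spec (smap hX x)).1 (wbSet_isSup hX x)
  · rintro ⟨Y, tY, s, r, hY, hs, hr, hrs⟩
    exact isContinuous_of_retract hY hs hr hrs
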